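/- (Proposition C.1, QR decomposition for quiver representations.) Let Q be a finite acyclic quiver without double edges, encoded by vertex set Fin n and edge set E ⊆ {(i,j) ∈ Fin n × Fin n : i < j}, and let d be a dimension vector. Let A = (A_{(i,j)} ∈ ℝ^{d_j × d_i})_{(i,j) ∈ E} be a representation of Q. Then there exist orthogonal matrices Q_i ∈ O(d_i) for each vertex i, with Q_i the identity whenever i is a source or a sink, and a representation R = (R_{(i,j)} ∈ ℝ^{d_j × d_i})_{(i,j) ∈ E} such that: (1) A_{(i,j)} = Q_j R_{(i,j)} Q_i⁻¹ for every edge (i,j) ∈ E; and (2) for every vertex i that is neither a source nor a sink, the matrix R_{→i} ∈ ℝ^{d_i × d_{→i}} obtained by horizontally concatenating the matrices R_{(j,i)} over incoming edges (j,i) ∈ E in increasing order of j is upper triangular (its (a,b) entry vanishes whenever a > b), where d_{→i} = Σ_{(j,i) ∈ E} d_j. -/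

import Mathlib

open scoped BigOperators RealInnerProductSpace


lemma exists_qr_square (p : ℕ) (f : Fin p → EuclideanSpace ℝ (Fin p)) :
    ∃ Q : Matrix.orthogonalGroup (Fin p) ℝ,
      ∀ (a c : Fin p), c < a →
        ∑ k, (Q : Matrix (Fin p) (Fin p) ℝ) k a * f c k = 0 := by
  have h : Module.finrank ℝ (EuclideanSpace ℝ (Fin p)) = Fintype.card (Fin p) := by
    simp
  have hinner : ∀ x y : EuclideanSpace ℝ (Fin p), ⟪x, y⟫ = ∑ k, x k * y k := by
    intro x y
    rw [PiLp.inner_apply]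
    simp [RCLike.inner_apply]
    exact Finset.sum_congr rfl fun _ _ => mul_comm _ _
  obtain ⟨b, hb⟩ : ∃ b : OrthonormalBasis (Fin p) ℝ (EuclideanSpace ℝ (Fin p)),
      ∀ (i j : Fin p), i < j → ⟪b j, f i⟫ = 0 := by
    letI i1 : LinearOrder (Fin p) := inferInstance
    letI i2 : LocallyFiniteOrderBot (Fin p) := inferInstance
    letI i3 : WellFoundedLT (Fin p) := inferInstance
    exact ⟨@InnerProductSpace.gramSchmidtOrthonormalBasis ℝ (EuclideanSpace ℝ (Fin p)) _ _ _ (Fin p) i1 i2 i3 _ _ h f,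
      fun i j hij => @InnerProductSpace.gramSchmidtOrthonormalBasis_inv_triangular ℝ (EuclideanSpace ℝ (Fin p))
        _ _ _ (Fin p) i1 i2 i3 _ _ h f i j hij⟩
  set Qmat : Matrix (Fin p) (Fin p) ℝ := Matrix.of (fun k a => b a k) with hQ
  have hmem : Qmat ∈ Matrix.orthogonalGroup (Fin p) ℝ := by
    rw [Matrix.mem_orthogonalGroup_iff']
    ext a a'
    rw [Matrix.mul_apply, Matrix.one_apply]
    have h1 := b.orthonormal
    rw [orthonormal_iff_ite] at h1
    have h2 := h1 a a'
    rw [hinner] at h2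
    simpa [Matrix.star_apply, hQ] using h2
  refine ⟨⟨Qmat, hmem⟩, ?_⟩
  intro a c hca
  have h0 := hb c a hca
  rw [hinner] at h0
  simpa [hQ] using h0

lemma exists_qr_rect {κ : Type*} (p : ℕ) (pos : κ → ℕ)
    (hinj : Function.Injective pos) (v : κ → Fin p → ℝ) :
    ∃ Q : Matrix.orthogonalGroup (Fin p) ℝ,
      ∀ (a : Fin p) (b : κ), pos b < (a : ℕ) →
        ∑ k, (Q : Matrix (Fin p) (Fin p) ℝ) k a * v b k = 0 := by
  classical
  set f : Fin p → EuclideanSpace ℝ (Fin p) :=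
    fun c => if h : ∃ b, pos b = (c : ℕ) then (WithLp.toLp 2 (v h.choose) : EuclideanSpace ℝ (Fin p)) else 0 with hf
  obtain ⟨Q, hQ⟩ := exists_qr_square p f
  refine ⟨Q, fun a b hba => ?_⟩
  have hbp : pos b < p := lt_trans hba a.isLt
  set c : Fin p := ⟨pos b, hbp⟩ with hc
  have hex : ∃ b', pos b' = (c : ℕ) := ⟨b, rfl⟩
  have hch : hex.choose = b := hinj (hex.choose_spec)
  have hfc : ∀ k, f c k = v b k := by
    intro k
    rw [hf]
    simp only [dif_pos hex, hch, WithLp.ofLp_toLp]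
  have := hQ a c hba
  rw [Finset.sum_congr rfl (fun k _ => by rw [hfc k])] at this
  exact this

def Tri (n : ℕ) (Edges : Finset (Fin n × Fin n)) (d : Fin n → ℕ)
    (A : ∀ i j : Fin n, Matrix (Fin (d j)) (Fin (d i)) ℝ)
    (Qm : ∀ i : Fin n, Matrix.orthogonalGroup (Fin (d i)) ℝ) (i : Fin n) : Prop :=
  ∀ j : Fin n, (j, i) ∈ Edges → ∀ (a : Fin (d i)) (c : Fin (d j)),
    (∑ j' ∈ Finset.univ.filter (fun j' : Fin n => j' < j ∧ (j', i) ∈ Edges), d j')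
        + (c : ℕ) < (a : ℕ) →
    ∑ k, (Qm i : Matrix (Fin (d i)) (Fin (d i)) ℝ) k a *
      (A j i * (Qm j : Matrix (Fin (d j)) (Fin (d j)) ℝ)) k c = 0

lemma exists_Qm (n : ℕ) (Edges : Finset (Fin n × Fin n))
    (hE : ∀ p ∈ Edges, p.1 < p.2)
    (d : Fin n → ℕ)
    (A : ∀ i j : Fin n, Matrix (Fin (d j)) (Fin (d i)) ℝ) (m : ℕ) :
    ∃ Qm : ∀ i : Fin n, Matrix.orthogonalGroup (Fin (d i)) ℝ,
      (∀ i, ((∀ j, (j, i) ∉ Edges) ∨ (∀ j, (i, j) ∉ Edges)) → Qm i = 1) ∧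
      ∀ i : Fin n, (i : ℕ) < m →
        ¬((∀ j, (j, i) ∉ Edges) ∨ (∀ j, (i, j) ∉ Edges)) →
        Tri n Edges d A Qm i := by
  classical
  induction m with
  | zero => exact ⟨fun _ => 1, fun _ _ => rfl, fun i hi => absurd hi (by omega)⟩
  | succ m ih =>
    obtain ⟨Qm', h1, h2⟩ := ih
    by_cases hm : ∃ im : Fin n, (im : ℕ) = m ∧
        ¬((∀ j, (j, im) ∉ Edges) ∨ (∀ j, (im, j) ∉ Edges))
    · obtain ⟨im, him, hnsos⟩ := hm
      -- set up the QR problem at vertex im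
      set off : Fin n → ℕ := fun j =>
        ∑ j' ∈ Finset.univ.filter (fun j' : Fin n => j' < j ∧ (j', im) ∈ Edges), d j' with hoff
      have key : ∀ (j1 j2 : Fin n), (j1, im) ∈ Edges → j1 < j2 →
          off j1 + d j1 ≤ off j2 := by
        intro j1 j2 hj1 hlt
        have hnot : j1 ∉ Finset.univ.filter (fun j' : Fin n => j' < j1 ∧ (j', im) ∈ Edges) := by
          simp
        have hsub : insert j1 (Finset.univ.filter (fun j' : Fin n => j' < j1 ∧ (j', im) ∈ Edges))
            ⊆ Finset.univ.filter (fun j' : Fin n => j' < j2 ∧ (j', im) ∈ Edges) := by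
          intro x hx
          rcases Finset.mem_insert.1 hx with rfl | hx
          · simp [hlt, hj1]
          · simp only [Finset.mem_filter, Finset.mem_univ, true_and] at hx ⊢
            exact ⟨lt_trans hx.1 hlt, hx.2⟩
        calc off j1 + d j1 = ∑ j' ∈ insert j1 (Finset.univ.filter
              (fun j' : Fin n => j' < j1 ∧ (j', im) ∈ Edges)), d j' := by
              rw [Finset.sum_insert hnot]; ring
          _ ≤ off j2 := Finset.sum_le_sum_of_subset hsub
      set pos : (Σ j : {j : Fin n // (j, im) ∈ Edges}, Fin (d j.1)) → ℕ :=
        fun x => off x.1.1 + (x.2 : ℕ) with hpos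
      have hinj : Function.Injective pos := by
        rintro ⟨⟨j1, hj1⟩, c1⟩ ⟨⟨j2, hj2⟩, c2⟩ h
        simp only [hpos] at h
        rcases lt_trichotomy j1 j2 with hlt | heq | hgt
        · exact absurd h (by have := key j1 j2 hj1 hlt; have := c1.isLt; omega)
        · subst heq
          have hc : c1 = c2 := Fin.ext (by omega)
          subst hc
          rfl
        · exact absurd h.symm (by have := key j2 j1 hj2 hgt; have := c2.isLt; omega)
      obtain ⟨Q, hQ⟩ := exists_qr_rect (d im) pos
        (v := fun x => fun k =>
          (A x.1.1 im * (Qm' x.1.1 : Matrix (Fin (d x.1.1)) (Fin (d x.1.1)) ℝ)) k x.2) hinj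
      set Qm : ∀ i : Fin n, Matrix.orthogonalGroup (Fin (d i)) ℝ :=
        Function.update Qm' im Q with hQm
      have hQmim : Qm im = Q := Function.update_self im Q Qm'
      have hQmne : ∀ i, i ≠ im → Qm i = Qm' i := fun i hi => Function.update_of_ne hi Q Qm'
      refine ⟨Qm, ?_, ?_⟩
      · intro i hi
        rcases eq_or_ne i im with rfl | hne
        · exact absurd hi hnsos
        · rw [hQmne i hne]; exact h1 i hi
      · intro i hi hns
        rcases (by omega : (i : ℕ) < m ∨ (i : ℕ) = m) with hi' | hi'
        · intro j hj a c hlt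
          have hji : j < i := hE (j, i) hj
          have hine : i ≠ im := fun h => by rw [h] at hi'; omega
          have hjne : j ≠ im := fun h => by
            rw [h] at hji; have := hji; omega
          rw [hQmne i hine, hQmne j hjne]
          exact h2 i hi' hns j hj a c hlt
        · have hiim : i = im := Fin.ext (by omega)
          subst hiim
          intro j hj a c hlt
          have hji : j < i := hE (j, i) hj
          have hjne : j ≠ i := ne_of_lt hji
          rw [hQmim, hQmne j hjne]
          exact hQ a ⟨⟨j, hj⟩, c⟩ hlt
    · refine ⟨Qm', h1, ?_⟩
      intro i hi hns
      rcases (by omega : (i : ℕ) < m ∨ (i : ℕ) = m) with hi' | hi'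
      · exact h2 i hi' hns
      · exact absurd ⟨i, hi', hns⟩ hm

/-- Proposition C.1: QR decomposition for quiver representations.
The quiver has vertex set `Fin n` and edge set `Edges ⊆ {(i,j) : i < j}` (hence it is
acyclic with no double edges); a representation assigns a matrix
`A (i,j) ∈ ℝ^{d_j × d_i}` to each edge `(i,j)`. There exist orthogonal matrices `Qm i`,
equal to the identity at every source (no incoming edge) and sink (no outgoing edge),
and a representation `R` with `A_{(i,j)} = Qm_j * R_{(i,j)} * Qm_i⁻¹` on every edge, such
that for every vertex `i` that is neither a source nor a sink, the horizontal
concatenation `R_{→i}` of the `R_{(j,i)}` over incoming edges (in increasing order of `j`)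
is upper triangular: its `(a, b)` entry vanishes whenever `a > b`. -/
theorem quiver_representation_QR_decomposition
    (n : ℕ) (Edges : Finset (Fin n × Fin n))
    (hE : ∀ p ∈ Edges, p.1 < p.2)
    (d : Fin n → ℕ) (hd : ∀ i, 1 ≤ d i)
    (A : ∀ i j : Fin n, Matrix (Fin (d j)) (Fin (d i)) ℝ) :
    ∃ (Qm : ∀ i : Fin n, Matrix.orthogonalGroup (Fin (d i)) ℝ)
      (R : ∀ i j : Fin n, Matrix (Fin (d j)) (Fin (d i)) ℝ),
      (∀ i : Fin n, ((∀ j, (j, i) ∉ Edges) ∨ (∀ j, (i, j) ∉ Edges)) → Qm i = 1) ∧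
      (∀ i j : Fin n, (i, j) ∈ Edges →
        A i j = (Qm j : Matrix (Fin (d j)) (Fin (d j)) ℝ) * R i j *
          (((Qm i)⁻¹ : Matrix.orthogonalGroup (Fin (d i)) ℝ) :
            Matrix (Fin (d i)) (Fin (d i)) ℝ)) ∧
      (∀ i : Fin n, (∃ j, (j, i) ∈ Edges) → (∃ j, (i, j) ∈ Edges) →
        ∀ j : Fin n, (j, i) ∈ Edges →
          ∀ (a : Fin (d i)) (c : Fin (d j)),
            (∑ j' ∈ Finset.univ.filter (fun j' : Fin n => j' < j ∧ (j', i) ∈ Edges), d j')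
                + (c : ℕ) < (a : ℕ) →
            R j i a c = 0) := by
  classical
  obtain ⟨Qm, hS, hT⟩ := exists_Qm n Edges hE d A n
  refine ⟨Qm, fun i j =>
    (((Qm j)⁻¹ : Matrix.orthogonalGroup (Fin (d j)) ℝ) : Matrix (Fin (d j)) (Fin (d j)) ℝ)
      * A i j * (Qm i : Matrix (Fin (d i)) (Fin (d i)) ℝ), hS, ?_, ?_⟩
  · intro i j hij
    simp only [Matrix.UnitaryGroup.inv_val]
    have hj1 : (Qm j : Matrix (Fin (d j)) (Fin (d j)) ℝ)
        * star (Qm j : Matrix (Fin (d j)) (Fin (d j)) ℝ) = 1 :=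
      Unitary.mul_star_self_of_mem (Qm j).2
    have hi1 : (Qm i : Matrix (Fin (d i)) (Fin (d i)) ℝ)
        * star (Qm i : Matrix (Fin (d i)) (Fin (d i)) ℝ) = 1 :=
      Unitary.mul_star_self_of_mem (Qm i).2
    calc A i j = ((Qm j : Matrix (Fin (d j)) (Fin (d j)) ℝ)
          * star (Qm j : Matrix (Fin (d j)) (Fin (d j)) ℝ)) * A i j
          * ((Qm i : Matrix (Fin (d i)) (Fin (d i)) ℝ)
          * star (Qm i : Matrix (Fin (d i)) (Fin (d i)) ℝ)) := by
          rw [hj1, hi1, Matrix.one_mul, Matrix.mul_one]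
      _ = _ := by simp only [Matrix.mul_assoc]
  · intro i hin hout j hj a c hlt
    have hns : ¬((∀ j, (j, i) ∉ Edges) ∨ (∀ j, (i, j) ∉ Edges)) := by
      rintro (h | h)
      · obtain ⟨j0, hj0⟩ := hin; exact h j0 hj0
      · obtain ⟨j0, hj0⟩ := hout; exact h j0 hj0
    have htri := hT i i.isLt hns j hj a c hlt
    simp only [Matrix.UnitaryGroup.inv_val]
    rw [Matrix.mul_assoc, Matrix.mul_apply]
    rw [← htri]
    refine Finset.sum_congr rfl fun k _ => ?_
    simp [Matrix.star_apply]
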